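/- In the boundary dynamical system on the edge z = 0, the increments of the first coordinate satisfy x_{n+1} - x_n = ρ(1 - c_n)(x_{n-1} - x_n) for n ≥ 1, and hence |x_{n+1} - x_n| ≤ (1/4)|x_{n-1} - x_{n-2}| for n ≥ 2; consequently (x_n) converges. -/
import Mathlib


open Matrix Filter

noncomputable def Mb (x : ℝ) : Matrix (Fin 3) (Fin 3) ℝ :=
  !![0, 0, 1 - x; 0, 0, x; 1, 1, 0]

def inSimplex (v : Fin 3 → ℝ) : Prop := (∀ i, 0 ≤ v i) ∧ v 0 + v 1 + v 2 = 1

/-- In the boundary dynamical system on the edge `z = 0`, the increments of the first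
coordinate satisfy `x_{n+1} - x_n = ρ(1 - c_n)(x_{n-1} - x_n)` for `n ≥ 1`, and hence
`|x_{n+1} - x_n| ≤ (1/4)|x_{n-1} - x_{n-2}|` for `n ≥ 2`; consequently `(x_n)`
converges. -/
theorem stmt11 (ρ : ℝ) (hρ : ρ ∈ Set.Ioo (0 : ℝ) 1)
    (x : ℕ → ℝ) (q : ℕ → Fin 3 → ℝ)
    (hx0 : x 0 ∈ Set.Ioo (0 : ℝ) 1) (hqS : ∀ n, inSimplex (q n))
    (hq : ∀ n, q (n + 1) = (Mb (x n)).mulVec (q n))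
    (hx : ∀ n, x (n + 1) = (1 - ρ) * x n + ρ * (1 - q n 0 - q (n + 1) 0)) :
    (∀ n, x (n + 2) - x (n + 1) = ρ * (1 - q (n + 1) 2) * (x n - x (n + 1))) ∧
    (∀ n, |x (n + 3) - x (n + 2)| ≤ (1 / 4) * |x (n + 1) - x n|) ∧
    (∃ L : ℝ, Tendsto x atTop (nhds L)) := by
  obtain ⟨hρ0, hρ1⟩ := hρ
  have hq0 : ∀ n, q (n + 1) 0 = (1 - x n) * q n 2 := by
    intro n
    rw [hq n]
    simp [Mb, mulVec, dotProduct, Fin.sum_univ_three]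
  have hq2 : ∀ n, q (n + 1) 2 = q n 0 + q n 1 := by
    intro n
    rw [hq n]
    simp [Mb, mulVec, dotProduct, Fin.sum_univ_three]
  have part1 : ∀ n, x (n + 2) - x (n + 1) = ρ * (1 - q (n + 1) 2) * (x n - x (n + 1)) := by
    intro n
    have hs : q n 0 + q n 1 + q n 2 = 1 := (hqS n).2
    have hb : q n 1 = 1 - q n 0 - q n 2 := by linarith
    rw [show n + 2 = (n + 1) + 1 from rfl, hx (n + 1), hq0 (n + 1), hq2 n,
      hq0 n, hx n, hb]
    ring
  refine ⟨part1, ?_, ?_⟩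
  · -- the quadratic bound
    intro n
    have hc0 : (0:ℝ) ≤ q (n + 1) 2 := (hqS (n + 1)).1 2
    have hc1 : q (n + 1) 2 ≤ 1 := by
      have h0 := (hqS (n + 1)).1 0
      have h1 := (hqS (n + 1)).1 1
      have hs := (hqS (n + 1)).2
      linarith
    have hc2 : q (n + 2) 2 = 1 - q (n + 1) 2 := by
      rw [hq2 (n + 1)]
      have := (hqS (n + 1)).2
      linarith
    have e1 := part1 (n + 1)
    have e2 := part1 n
    rw [hc2] at e1
    have key : x (n + 3) - x (n + 2)
        = ρ ^ 2 * q (n + 1) 2 * (1 - q (n + 1) 2) * (x (n + 1) - x n) := by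
      linear_combination e1 - ρ * q (n + 1) 2 * e2
    rw [key, abs_mul]
    have habs : |ρ ^ 2 * q (n + 1) 2 * (1 - q (n + 1) 2)|
        = ρ ^ 2 * q (n + 1) 2 * (1 - q (n + 1) 2) := by
      apply abs_of_nonneg
      have h1c : (0:ℝ) ≤ 1 - q (n + 1) 2 := by linarith
      exact mul_nonneg (mul_nonneg (sq_nonneg ρ) hc0) h1c
    rw [habs]
    apply mul_le_mul_of_nonneg_right _ (abs_nonneg _)
    nlinarith [sq_nonneg (q (n + 1) 2 - 1/2), sq_nonneg ρ]
  · -- convergence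
    have part2 : ∀ n, |x (n + 3) - x (n + 2)| ≤ (1 / 4) * |x (n + 1) - x n| := by
      intro n
      have hc0 : (0:ℝ) ≤ q (n + 1) 2 := (hqS (n + 1)).1 2
      have hc1 : q (n + 1) 2 ≤ 1 := by
        have h0 := (hqS (n + 1)).1 0
        have h1 := (hqS (n + 1)).1 1
        have hs := (hqS (n + 1)).2
        linarith
      have hc2 : q (n + 2) 2 = 1 - q (n + 1) 2 := by
        rw [hq2 (n + 1)]
        have := (hqS (n + 1)).2
        linarith
      have e1 := part1 (n + 1)
      have e2 := part1 n
      rw [hc2] at e1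
      have key : x (n + 3) - x (n + 2)
          = ρ ^ 2 * q (n + 1) 2 * (1 - q (n + 1) 2) * (x (n + 1) - x n) := by
        linear_combination e1 - ρ * q (n + 1) 2 * e2
      rw [key, abs_mul]
      have habs : |ρ ^ 2 * q (n + 1) 2 * (1 - q (n + 1) 2)|
          = ρ ^ 2 * q (n + 1) 2 * (1 - q (n + 1) 2) := by
        apply abs_of_nonneg
        have h1c : (0:ℝ) ≤ 1 - q (n + 1) 2 := by linarith
        exact mul_nonneg (mul_nonneg (sq_nonneg ρ) hc0) h1c
      rw [habs]
      apply mul_le_mul_of_nonneg_right _ (abs_nonneg _)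
      nlinarith [sq_nonneg (q (n + 1) 2 - 1/2), sq_nonneg ρ]
    set C : ℝ := max |x 1 - x 0| (2 * |x 2 - x 1|) with hCdef
    have hC0 : 0 ≤ C := le_trans (abs_nonneg _) (le_max_left _ _)
    have hC : ∀ n, |x (n + 1) - x n| ≤ C * (1 / 2 : ℝ) ^ n := by
      intro n
      induction n using Nat.strong_induction_on with
      | _ n ih =>
        match n with
        | 0 =>
          have h : C * (1 / 2 : ℝ) ^ (0 : ℕ) = C := by norm_num
          rw [h]
          exact le_max_left _ _
        | 1 =>
          have h := le_max_right |x 1 - x 0| (2 * |x 2 - x 1|)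
          have : C * (1 / 2 : ℝ) ^ 1 = C / 2 := by ring
          rw [this]
          linarith
        | (m + 2) =>
          have h1 := part2 m
          have h2 := ih m (by omega)
          calc |x (m + 2 + 1) - x (m + 2)| ≤ (1 / 4) * |x (m + 1) - x m| := h1
            _ ≤ (1 / 4) * (C * (1 / 2 : ℝ) ^ m) := by linarith
            _ = C * (1 / 2 : ℝ) ^ (m + 2) := by ring
    have hcauchy : CauchySeq x := by
      apply cauchySeq_of_le_geometric (1 / 2 : ℝ) C (by norm_num)
      intro n
      rw [Real.dist_eq, abs_sub_comm]
      exact hC n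
    exact cauchySeq_tendsto_of_complete hcauchy
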